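/- Let (Mₙ) satisfy M_{n+1} = [[Mₙ, -I],[I, Mₙ+2I]]. Then for any λ ∈ k and n ≥ 0, det(M_{n+1} + λI) = det(M₁ + (λ+n)I)^{2ⁿ}. In particular, if det(M₁ + nI) ≠ 0 for all n ≥ 0, then every M_{n+1} is invertible. -/
import Mathlib


/-- Index types for the iterated block construction: `Iter ι n` indexes the rows of
`M_{n+1}` when `ι` indexes the rows of `M₁`. -/
def Iter (ι : Type) : ℕ → Type
  | 0 => ι
  | n + 1 => Iter ι n ⊕ Iter ι n

def iterFintype {ι : Type} [Fintype ι] : (n : ℕ) → Fintype (Iter ι n)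
  | 0 => inferInstanceAs (Fintype ι)
  | n + 1 =>
    letI := iterFintype (ι := ι) n
    inferInstanceAs (Fintype (Iter ι n ⊕ Iter ι n))

def iterDecEq {ι : Type} [DecidableEq ι] : (n : ℕ) → DecidableEq (Iter ι n)
  | 0 => inferInstanceAs (DecidableEq ι)
  | n + 1 =>
    letI := iterDecEq (ι := ι) n
    inferInstanceAs (DecidableEq (Iter ι n ⊕ Iter ι n))

instance {ι : Type} [Fintype ι] (n : ℕ) : Fintype (Iter ι n) := iterFintype n
instance {ι : Type} [DecidableEq ι] (n : ℕ) : DecidableEq (Iter ι n) := iterDecEq n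

/-- The sequence of matrices `M₁ = A`, `M_{n+1} = [[Mₙ, -I],[I, Mₙ + 2I]]`;
here `Mseq A n = M_{n+1}`. -/
def Mseq {k : Type} [Field k] {ι : Type} [Fintype ι] [DecidableEq ι]
    (A : Matrix ι ι k) : (n : ℕ) → Matrix (Iter ι n) (Iter ι n) k
  | 0 => A
  | n + 1 => Matrix.fromBlocks (Mseq A n) (-1) 1 (Mseq A n + (2 : k) • 1)

/-- For the sequence `M_{n+1} = [[Mₙ, -I],[I, Mₙ + 2I]]` one has
`det(M_{n+1} + λI) = det(M₁ + (λ+n)I)^{2ⁿ}` for all `λ` and `n ≥ 0`; in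
particular, if `det(M₁ + nI) ≠ 0` for all `n ≥ 0`, then every `M_{n+1}` is
invertible. -/
theorem det_block_recursion
    {k : Type} [Field k] {ι : Type} [Fintype ι] [DecidableEq ι]
    (A : Matrix ι ι k) :
    (∀ (n : ℕ) (lam : k),
      (Mseq A n + lam • 1).det = ((A + (lam + n) • 1).det) ^ (2 ^ n)) ∧
    ((∀ n : ℕ, (A + (n : k) • 1).det ≠ 0) → ∀ n : ℕ, IsUnit (Mseq A n)) := by
  have main : ∀ (n : ℕ) (lam : k),
      (Mseq A n + lam • 1).det = ((A + (lam + n) • 1).det) ^ (2 ^ n) := by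
    intro n
    induction n with
    | zero => intro lam; show (A + lam • 1).det = _; simp
    | succ n ih =>
      intro lam
      set X := Mseq A n with hX
      have key : (Matrix.fromBlocks 1 1 0 1 : Matrix (Iter ι n ⊕ Iter ι n) (Iter ι n ⊕ Iter ι n) k) *
          (Matrix.fromBlocks X (-1) 1 (X + (2:k) • 1) + lam • 1) *
          (Matrix.fromBlocks 1 (-1) 0 1) =
          Matrix.fromBlocks (X + (lam + 1) • 1) 0 1 (X + (lam + 1) • 1) := by
        rw [← Matrix.fromBlocks_one, Matrix.fromBlocks_smul, Matrix.fromBlocks_add,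
          Matrix.fromBlocks_multiply, Matrix.fromBlocks_multiply]
        simp [Matrix.mul_smul, add_smul, two_smul]
        refine ⟨by abel, by abel, by abel⟩
      have hdet := congrArg Matrix.det key
      rw [Matrix.det_mul, Matrix.det_mul, Matrix.det_fromBlocks_zero₂₁,
        Matrix.det_fromBlocks_zero₂₁, Matrix.det_fromBlocks_zero₁₂] at hdet
      simp only [Matrix.det_one, one_mul, mul_one] at hdet
      have h1 : (Mseq A (n+1) + lam • 1).det = (X + (lam + 1) • 1).det ^ 2 := by
        have : Mseq A (n+1) + lam • 1 = Matrix.fromBlocks X (-1) 1 (X + (2:k) • 1) + lam • 1 := rfl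
        rw [this]
        rw [show (X + (lam + 1) • 1).det ^ 2 = (X + (lam + 1) • 1).det * (X + (lam + 1) • 1).det
          from sq _]
        exact hdet
      rw [h1, ih (lam + 1), ← pow_mul, ← pow_succ]
      congr 2
      push_cast; ring
  refine ⟨main, fun h n => ?_⟩
  have := main n 0
  rw [zero_smul, add_zero, zero_add] at this
  exact (Matrix.isUnit_iff_isUnit_det _).mpr (isUnit_iff_ne_zero.mpr (by
    rw [this]; exact pow_ne_zero _ (h n)))
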